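/- The bivariate generating functions B(z,x) = Σ_{n,i} b_{n,i} zⁿ xⁱ and R(z,x) = Σ_{n,i} r_{n,i} zⁿ xⁱ, where b_{n,i} (resp. r_{n,i}) is the number of B-colorings (resp. R-colorings) of size n of lambda skeletons of degree i, satisfy the identity B(z,x) = x + B(z,x)·R(z,x) as formal power series in the two variables z and x. -/

import Mathlib

/-- Lambda skeletons `Λ̃(i)`, graded by degree. -/
inductive Skel : ℕ → Type
  | leaf : Skel 1
  | app : {j k : ℕ} → Skel j → Skel k → Skel (j + k)
  | lam : {i : ℕ} → Skel (i + 1) → Skel i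

/-- The two colors: `B` ("blue", neutral) and `R` ("red", normal). -/
inductive Color : Type
  | B : Color
  | R : Color
  deriving DecidableEq

/-- `Col c i p`: colorings (derivations of neutrality for `c = B`,
respectively normality for `c = R`) of the skeleton `p` of degree `i`,
by the rules (v), (a), (s), (ℓ). -/
inductive Col : Color → (i : ℕ) → Skel i → Type
  | v : Col Color.B 1 Skel.leaf
  | a {j k : ℕ} {p : Skel j} {q : Skel k} :
      Col Color.B j p → Col Color.R k q → Col Color.B (j + k) (Skel.app p q)
  | s {i : ℕ} {p : Skel i} : Col Color.B i p → Col Color.R i p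
  | l {i : ℕ} {p : Skel (i + 1)} : Col Color.R (i + 1) p → Col Color.R i (Skel.lam p)

/-- The size of a coloring: the number of uses of the s-rule in it. -/
def Col.size : {c : Color} → {i : ℕ} → {p : Skel i} → Col c i p → ℕ
  | _, _, _, Col.v => 0
  | _, _, _, Col.a d e => d.size + e.size
  | _, _, _, Col.s d => d.size + 1
  | _, _, _, Col.l d => d.size

/-- The number of colorings of color `c` and size `n` of lambda skeletons
of degree `i`. -/
noncomputable def colCount (c : Color) (n i : ℕ) : ℕ :=
  Nat.card { pp : (p : Skel i) × Col c i p // Col.size pp.2 = n }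

/-- The bivariate generating function `B(z,x)` counting B-colorings by size
(exponent of `z`, variable `0`) and degree (exponent of `x`, variable `1`). -/
noncomputable def Bgf : MvPowerSeries (Fin 2) ℚ :=
  fun d => (colCount Color.B (d 0) (d 1) : ℚ)

/-- The bivariate generating function `R(z,x)` counting R-colorings by size
(exponent of `z`, variable `0`) and degree (exponent of `x`, variable `1`). -/
noncomputable def Rgf : MvPowerSeries (Fin 2) ℚ :=
  fun d => (colCount Color.R (d 0) (d 1) : ℚ)

/-! ### Auxiliary development -/

open Finset

/-- The set of colorings of color `c`, size `n`, degree `i`. -/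
abbrev ColS (c : Color) (n i : ℕ) : Type :=
  { pp : (p : Skel i) × Col c i p // Col.size pp.2 = n }

lemma colCount_def (c : Color) (n i : ℕ) : colCount c n i = Nat.card (ColS c n i) := rfl

/-- Every R-coloring uses the s-rule at least once. -/
lemma Col.size_pos : ∀ {c : Color} {i : ℕ} {p : Skel i} (d : Col c i p),
    c = Color.R → 0 < d.size := by
  intro c i p d
  induction d with
  | v => intro h; exact absurd h (by simp)
  | a d e ihd ihe => intro h; exact absurd h (by simp)
  | s d ih => intro _; simp [Col.size]
  | l d ih => intro _; exact ih rfl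

/-- Degree is bounded by size (plus one for B-colorings). -/
lemma Col.deg_le : ∀ {c : Color} {i : ℕ} {p : Skel i} (d : Col c i p),
    i ≤ d.size + (if c = Color.B then 1 else 0) := by
  intro c i p d
  induction d with
  | v => simp [Col.size]
  | a d e ihd ihe => simp only [Col.size] at *; simp at ihd ihe ⊢; omega
  | s d ih => simp only [Col.size] at *; simp at ih ⊢; omega
  | l d ih => simp only [Col.size] at *; simp at ih ⊢; omega

lemma ColS.isEmpty_R_zero (i : ℕ) : IsEmpty (ColS Color.R 0 i) := by
  constructor
  rintro ⟨⟨p, d⟩, hs⟩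
  have h1 : 0 < Col.size d := d.size_pos rfl
  have h2 : Col.size d = 0 := hs
  omega

lemma ColS.isEmpty_R_big {n i : ℕ} (h : n < i) : IsEmpty (ColS Color.R n i) := by
  constructor
  rintro ⟨⟨p, d⟩, hs⟩
  have h1 : i ≤ Col.size d + (if Color.R = Color.B then 1 else 0) := d.deg_le
  have h2 : Col.size d = n := hs
  simp at h1
  omega

/-- Cast a coloring set along equalities of the parameters. -/
def ColS.cast {c : Color} {n n' i i' : ℕ} (hn : n = n') (hi : i = i')
    (x : ColS c n i) : ColS c n' i' := hn ▸ hi ▸ x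

/-- A sigma type collecting data over two antidiagonal constraints. -/
abbrev SigC (n i : ℕ) (F : ℕ → ℕ → ℕ → ℕ → Type) : Type :=
  (m : ℕ) × (m' : ℕ) × (j : ℕ) × (k : ℕ) ×
    (PLift (m + m' = n ∧ j + k = i)) × F m m' j k

/-- The same data indexed over a product of antidiagonal finsets. -/
abbrev SigF (n i : ℕ) (F : ℕ → ℕ → ℕ → ℕ → Type) : Type :=
  (x : (antidiagonal n ×ˢ antidiagonal i : Finset ((ℕ × ℕ) × (ℕ × ℕ)))) ×
    F x.1.1.1 x.1.1.2 x.1.2.1 x.1.2.2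

def eqSig (n i : ℕ) (F : ℕ → ℕ → ℕ → ℕ → Type) : SigC n i F ≃ SigF n i F where
  toFun := fun y => match y with
    | ⟨m, m', j, k, h, y⟩ =>
      ⟨⟨((m, m'), (j, k)), by
        rw [Finset.mem_product, Finset.HasAntidiagonal.mem_antidiagonal, Finset.HasAntidiagonal.mem_antidiagonal]
        exact h.down⟩, y⟩
  invFun := fun y => match y with
    | ⟨⟨((m, m'), (j, k)), hx⟩, y⟩ =>
      ⟨m, m', j, k, ⟨by
        rw [Finset.mem_product, Finset.HasAntidiagonal.mem_antidiagonal, Finset.HasAntidiagonal.mem_antidiagonal] at hx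
        exact hx⟩, y⟩
  left_inv := by rintro ⟨m, m', j, k, ⟨h⟩, y⟩; rfl
  right_inv := by rintro ⟨⟨⟨⟨m, m'⟩, j, k⟩, hx⟩, y⟩; rfl

lemma natCard_sigma {ι : Type*} [Fintype ι] (f : ι → Type*) [∀ i, Finite (f i)] :
    Nat.card ((i : ι) × f i) = ∑ i, Nat.card (f i) := by
  letI : ∀ i, Fintype (f i) := fun i => Fintype.ofFinite _
  simp [Nat.card_eq_fintype_card]

lemma card_SigC (n i : ℕ) (F : ℕ → ℕ → ℕ → ℕ → Type) [∀ m m' j k, Finite (F m m' j k)] :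
    Nat.card (SigC n i F) =
      ∑ x ∈ antidiagonal n ×ˢ antidiagonal i, Nat.card (F x.1.1 x.1.2 x.2.1 x.2.2) := by
  rw [Nat.card_congr (eqSig n i F)]
  rw [natCard_sigma]
  rw [Finset.sum_coe_sort (antidiagonal n ×ˢ antidiagonal i)
    (fun x => Nat.card (F x.1.1 x.1.2 x.2.1 x.2.2))]

/-- Decomposition target for B-colorings. -/
abbrev TB (n i : ℕ) : Type :=
  PLift (n = 0 ∧ i = 1) ⊕
    SigC n i (fun m m' j k => ColS Color.B m j × ColS Color.R m' k)

def toTB : (n i : ℕ) → ColS Color.B n i → TB n i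
  | n, _, ⟨⟨_, Col.v⟩, hs⟩ => Sum.inl ⟨⟨hs.symm, rfl⟩⟩
  | n, _, ⟨⟨_, @Col.a j k p q d e⟩, hs⟩ =>
      Sum.inr ⟨d.size, e.size, j, k, ⟨⟨hs, rfl⟩⟩, ⟨⟨p, d⟩, rfl⟩, ⟨⟨q, e⟩, rfl⟩⟩

def ofTB : (n i : ℕ) → TB n i → ColS Color.B n i
  | _, _, Sum.inl h =>
      ColS.cast h.down.1.symm h.down.2.symm ⟨⟨Skel.leaf, Col.v⟩, rfl⟩
  | _, _, Sum.inr ⟨m, m', j, k, h, ⟨⟨p, d⟩, hd⟩, ⟨⟨q, e⟩, he⟩⟩ =>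
      ColS.cast h.down.1 h.down.2
        ⟨⟨Skel.app p q, Col.a d e⟩, by exact congrArg₂ (· + ·) hd he⟩

lemma ofTB_toTB : ∀ (n i : ℕ) (x : ColS Color.B n i), ofTB n i (toTB n i x) = x := by
  rintro n i ⟨⟨p, d⟩, hs⟩
  subst hs
  cases d with
  | v => rfl
  | a d e => rfl

lemma toTB_ofTB : ∀ (n i : ℕ) (y : TB n i), toTB n i (ofTB n i y) = y := by
  rintro n i (⟨h1, h2⟩ | ⟨m, m', j, k, ⟨h1, h2⟩, ⟨⟨p, d⟩, hd⟩, ⟨⟨q, e⟩, he⟩⟩)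
  · subst h1; subst h2; rfl
  · subst hd; subst he; subst h1; subst h2; rfl

def eqTB (n i : ℕ) : ColS Color.B n i ≃ TB n i :=
  ⟨toTB n i, ofTB n i, ofTB_toTB n i, toTB_ofTB n i⟩

/-- Decomposition target for R-colorings. -/
abbrev TR (n i : ℕ) : Type :=
  { pp : (p : Skel i) × Col Color.B i p // Col.size pp.2 + 1 = n } ⊕ ColS Color.R n (i + 1)

def toTR : (n i : ℕ) → ColS Color.R n i → TR n i
  | _, _, ⟨⟨_, Col.s d⟩, hs⟩ => Sum.inl ⟨⟨_, d⟩, hs⟩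
  | _, _, ⟨⟨_, @Col.l _ p r⟩, hs⟩ => Sum.inr ⟨⟨p, r⟩, hs⟩

def ofTR : (n i : ℕ) → TR n i → ColS Color.R n i
  | _, _, Sum.inl ⟨⟨p, d⟩, h⟩ => ⟨⟨p, Col.s d⟩, h⟩
  | _, _, Sum.inr ⟨⟨p, r⟩, h⟩ => ⟨⟨Skel.lam p, Col.l r⟩, h⟩

lemma ofTR_toTR : ∀ (n i : ℕ) (x : ColS Color.R n i), ofTR n i (toTR n i x) = x := by
  rintro n i ⟨⟨p, d⟩, hs⟩
  cases d with
  | s d => rfl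
  | l r => rfl

lemma toTR_ofTR : ∀ (n i : ℕ) (y : TR n i), toTR n i (ofTR n i y) = y := by
  rintro n i (⟨⟨p, d⟩, h⟩ | ⟨⟨p, r⟩, h⟩) <;> rfl

def eqTR (n i : ℕ) : ColS Color.R n i ≃ TR n i :=
  ⟨toTR n i, ofTR n i, ofTR_toTR n i, toTR_ofTR n i⟩

def eqTRleft (m i : ℕ) :
    { pp : (p : Skel i) × Col Color.B i p // Col.size pp.2 + 1 = m + 1 } ≃ ColS Color.B m i :=
  Equiv.subtypeEquivRight (fun _ => by omega)

lemma isEmpty_TRleft (i : ℕ) :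
    IsEmpty { pp : (p : Skel i) × Col Color.B i p // Col.size pp.2 + 1 = 0 } :=
  ⟨by rintro ⟨_, h⟩; omega⟩

instance plift_finite (P : Prop) : Finite (PLift P) := by
  haveI : Subsingleton (PLift P) := ⟨by rintro ⟨a⟩ ⟨b⟩; rfl⟩
  exact Finite.of_subsingleton

/-- Finiteness of the sets of colorings. -/
theorem finColS : ∀ (n : ℕ) (c : Color) (i : ℕ), Finite (ColS c n i) := by
  intro n
  induction n using Nat.strong_induction_on with
  | _ n IH =>
    have hR : ∀ (d i : ℕ), n < i + d → Finite (ColS Color.R n i) := by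
      intro d
      induction d with
      | zero =>
        intro i h
        haveI := ColS.isEmpty_R_big (show n < i by omega)
        exact Finite.of_subsingleton
      | succ d ihd =>
        intro i h
        haveI h2 : Finite (ColS Color.R n (i + 1)) := ihd (i + 1) (by omega)
        haveI h1 : Finite { pp : (p : Skel i) × Col Color.B i p // Col.size pp.2 + 1 = n } := by
          cases n with
          | zero => haveI := isEmpty_TRleft i; exact Finite.of_subsingleton
          | succ m =>
            haveI : Finite (ColS Color.B m i) := IH m (by omega) Color.B i
            exact Finite.of_equiv _ (eqTRleft m i).symm
        exact Finite.of_equiv _ (eqTR n i).symm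
    have hR' : ∀ i, Finite (ColS Color.R n i) := fun i => hR (n + 1) i (by omega)
    intro c i
    cases c with
    | R => exact hR' i
    | B =>
      have hfib : ∀ (x : (antidiagonal n ×ˢ antidiagonal i : Finset ((ℕ × ℕ) × (ℕ × ℕ)))),
          Finite (ColS Color.B x.1.1.1 x.1.2.1 × ColS Color.R x.1.1.2 x.1.2.2) := by
        rintro ⟨⟨⟨m, m'⟩, ⟨j, k⟩⟩, hx⟩
        rw [Finset.mem_product, Finset.HasAntidiagonal.mem_antidiagonal, Finset.HasAntidiagonal.mem_antidiagonal] at hx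
        have hx1 : m + m' = n := hx.1
        have hx2 : j + k = i := hx.2
        rcases Nat.eq_zero_or_pos m' with h0 | h0
        · subst h0
          haveI := ColS.isEmpty_R_zero k
          haveI : IsEmpty (ColS Color.B m j × ColS Color.R 0 k) := by infer_instance
          exact Finite.of_subsingleton
        · haveI f1 : Finite (ColS Color.B m j) := IH m (by omega) Color.B j
          haveI f2 : Finite (ColS Color.R m' k) := by
            rcases lt_or_eq_of_le (show m' ≤ n by omega) with h | h
            · exact IH m' h Color.R k
            · subst h; exact hR' k
          exact Finite.instProd
      haveI := hfib
      haveI : Finite (SigF n i (fun m m' j k => ColS Color.B m j × ColS Color.R m' k)) := by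
        infer_instance
      haveI : Finite (SigC n i (fun m m' j k => ColS Color.B m j × ColS Color.R m' k)) :=
        Finite.of_equiv (SigF n i (fun m m' j k => ColS Color.B m j × ColS Color.R m' k))
          (eqSig n i (fun m m' j k => ColS Color.B m j × ColS Color.R m' k)).symm
      exact Finite.of_equiv _ (eqTB n i).symm

instance (c : Color) (n i : ℕ) : Finite (ColS c n i) := finColS n c i

lemma natCard_plift (P : Prop) [Decidable P] : Nat.card (PLift P) = if P then 1 else 0 := by
  split
  · next h => haveI : Unique (PLift P) := ⟨⟨⟨h⟩⟩, by rintro ⟨a⟩; rfl⟩; exact Nat.card_unique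
  · next h => haveI : IsEmpty (PLift P) := ⟨fun x => h x.down⟩; exact Nat.card_of_isEmpty

/-- The recurrence for B-colorings. -/
lemma colCount_B (n i : ℕ) :
    colCount Color.B n i = (if n = 0 ∧ i = 1 then 1 else 0) +
      ∑ x ∈ antidiagonal n ×ˢ antidiagonal i,
        colCount Color.B x.1.1 x.2.1 * colCount Color.R x.1.2 x.2.2 := by
  haveI : Finite (SigC n i (fun m m' j k => ColS Color.B m j × ColS Color.R m' k)) :=
    Finite.of_equiv (SigF n i (fun m m' j k => ColS Color.B m j × ColS Color.R m' k))
      (eqSig n i (fun m m' j k => ColS Color.B m j × ColS Color.R m' k)).symm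
  rw [colCount_def, Nat.card_congr (eqTB n i), Nat.card_sum, natCard_plift, card_SigC]
  congr 1
  exact Finset.sum_congr rfl fun x _ => by rw [Nat.card_prod]; rfl

/-- The recurrence for R-colorings. -/
lemma colCount_R (n i : ℕ) :
    colCount Color.R n i =
      (match n with | 0 => 0 | m + 1 => colCount Color.B m i) + colCount Color.R n (i + 1) := by
  have h1 : Finite { pp : (p : Skel i) × Col Color.B i p // Col.size pp.2 + 1 = n } := by
    cases n with
    | zero => haveI := isEmpty_TRleft i; exact Finite.of_subsingleton
    | succ m => exact Finite.of_equiv _ (eqTRleft m i).symm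
  rw [colCount_def, Nat.card_congr (eqTR n i), Nat.card_sum]
  congr 1
  cases n with
  | zero => haveI := isEmpty_TRleft i; exact Nat.card_of_isEmpty
  | succ m => rw [Nat.card_congr (eqTRleft m i)]; rfl

/-! ### Finsupp plumbing on `Fin 2` -/

noncomputable def fs (a b : ℕ) : Fin 2 →₀ ℕ := Finsupp.single 0 a + Finsupp.single 1 b

@[simp] lemma fs_apply0 (a b : ℕ) : fs a b 0 = a := by
  simp [fs, Finsupp.single_apply]

@[simp] lemma fs_apply1 (a b : ℕ) : fs a b 1 = b := by
  simp [fs, Finsupp.single_apply]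

lemma fin2_ext {u v : Fin 2 →₀ ℕ} (h0 : u 0 = v 0) (h1 : u 1 = v 1) : u = v := by
  ext x
  fin_cases x
  · exact h0
  · exact h1

lemma fs_eq (u : Fin 2 →₀ ℕ) : fs (u 0) (u 1) = u :=
  fin2_ext (by simp) (by simp)

lemma single11 : Finsupp.single (1 : Fin 2) 1 = fs 0 1 :=
  fin2_ext (by simp [Finsupp.single_apply]) (by simp [Finsupp.single_apply])


/-- Equation (1): `B(z,x) = x + B(z,x)·R(z,x)` as formal power series. -/
theorem Bgf_functional_equation :
    Bgf = MvPowerSeries.X 1 + Bgf * Rgf := by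
  classical
  apply MvPowerSeries.ext
  intro d
  rw [map_add, MvPowerSeries.coeff_X, MvPowerSeries.coeff_mul]
  simp only [MvPowerSeries.coeff_apply]
  show (colCount Color.B (d 0) (d 1) : ℚ) = _ +
    ∑ p ∈ Finset.HasAntidiagonal.antidiagonal d,
      (colCount Color.B (p.1 0) (p.1 1) : ℚ) * (colCount Color.R (p.2 0) (p.2 1) : ℚ)
  rw [colCount_B (d 0) (d 1)]
  push_cast
  congr 1
  · by_cases h : d 0 = 0 ∧ d 1 = 1
    · have : d = Finsupp.single 1 1 := by
        rw [single11]; exact (fs_eq d).symm.trans (by rw [h.1, h.2])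
      simp [h, this]
    · have : d ≠ Finsupp.single 1 1 := by
        intro hd
        apply h
        subst hd
        rw [single11]
        simp
      simp [h, this]
  · refine (Finset.sum_nbij'
      (f := fun x : (ℕ × ℕ) × (ℕ × ℕ) =>
        (colCount Color.B x.1.1 x.2.1 : ℚ) * (colCount Color.R x.1.2 x.2.2 : ℚ))
      (g := fun p : (Fin 2 →₀ ℕ) × (Fin 2 →₀ ℕ) =>
        (colCount Color.B (p.1 0) (p.1 1) : ℚ) * (colCount Color.R (p.2 0) (p.2 1) : ℚ)) (i := fun x => (fs x.1.1 x.2.1, fs x.1.2 x.2.2))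
      (j := fun p => ((p.1 0, p.2 0), (p.1 1, p.2 1))) ?_ ?_ ?_ ?_ ?_)
    · rintro ⟨⟨m, m'⟩, j, k⟩ hx
      rw [Finset.mem_product, Finset.HasAntidiagonal.mem_antidiagonal, Finset.HasAntidiagonal.mem_antidiagonal] at hx
      rw [Finset.HasAntidiagonal.mem_antidiagonal]
      apply fin2_ext <;> simp [hx.1, hx.2]
    · rintro ⟨u, v⟩ hp
      rw [Finset.HasAntidiagonal.mem_antidiagonal] at hp
      rw [Finset.mem_product, Finset.HasAntidiagonal.mem_antidiagonal, Finset.HasAntidiagonal.mem_antidiagonal]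
      constructor
      · show u 0 + v 0 = d 0
        rw [← hp]; simp
      · show u 1 + v 1 = d 1
        rw [← hp]; simp
    · rintro ⟨⟨m, m'⟩, j, k⟩ _
      simp
    · rintro ⟨u, v⟩ _
      simp [fs_eq]
    · rintro ⟨⟨m, m'⟩, j, k⟩ _
      simp
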